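/- Let α be a confluent partial action of a monoid M on a set X with globalization Y. Then for every triple (u1, u2, u3) ∈ M³ (indices mod 3) there exists w ∈ M such that for i = 1, 2, 3, (ui·X) ∩ (u_{i+1}·X) ⊆ w·X in Y. -/

import Mathlib

/-- One-step reduction on words over `G` induced by the rules `R` of a monoid
presentation `⟨G|R⟩`. -/
def MStep {G : Type*} (R : List G → List G → Prop) : List G → List G → Prop :=
  fun w₁ w₂ => ∃ a l r b : List G, R l r ∧ w₁ = a ++ l ++ b ∧ w₂ = a ++ r ++ b

/-- One-step reduction on `G* × X` for a confluent partial action: either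
rewrite the word via `R`, or let the last (rightmost, acting first) generator
act on the point. -/
def PStep {G X : Type*} (R : List G → List G → Prop) (act : G → X → Option X) :
    List G × X → List G × X → Prop := fun p q =>
  (MStep R p.1 q.1 ∧ p.2 = q.2) ∨
  (∃ (w : List G) (g : G) (y : X),
    p.1 = w ++ [g] ∧ act g p.2 = some y ∧ q.1 = w ∧ q.2 = y)

open Relation List

section Aux
variable {G X : Type*} {R : List G → List G → Prop} {act : G → X → Option X}

lemma aux_cr (hconfP : ∀ p q₁ q₂ : List G × X, ReflTransGen (PStep R act) p q₁ →
      ReflTransGen (PStep R act) p q₂ →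
      ∃ t, ReflTransGen (PStep R act) q₁ t ∧ ReflTransGen (PStep R act) q₂ t)
    {p q} (h : EqvGen (PStep R act) p q) :
    ∃ t, ReflTransGen (PStep R act) p t ∧ ReflTransGen (PStep R act) q t := by
  induction h with
  | rel a b hab => exact ⟨b, ReflTransGen.single hab, ReflTransGen.refl⟩
  | refl a => exact ⟨a, .refl, .refl⟩
  | symm a b _ ih => exact ⟨ih.choose, ih.choose_spec.2, ih.choose_spec.1⟩
  | trans a b c _ _ ih₁ ih₂ =>
    obtain ⟨t₁, ha, hb⟩ := ih₁
    obtain ⟨t₂, hb', hc⟩ := ih₂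
    obtain ⟨t, h₁, h₂⟩ := hconfP b t₁ t₂ hb hb'
    exact ⟨t, ha.trans h₁, hc.trans h₂⟩

lemma aux_lift {u n : List G} (h : ReflTransGen (MStep R) u n) (x : X) :
    ReflTransGen (PStep R act) (u, x) (n, x) := by
  induction h with
  | refl => exact .refl
  | tail _ hstep ih => exact ih.tail (Or.inl ⟨hstep, rfl⟩)

lemma aux_rtg_eqv {p q : List G × X} (h : ReflTransGen (PStep R act) p q) :
    EqvGen (PStep R act) p q := by
  induction h with
  | refl => exact .refl _
  | tail _ hstep ih => exact ih.trans _ _ _ (.rel _ _ hstep)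

lemma aux_nf_rtg {α : Type*} {r : α → α → Prop} {p q : α}
    (hn : ∀ s, ¬ r p s) (h : ReflTransGen r p q) : q = p := by
  rcases h.cases_head with h | ⟨c, hc, -⟩
  · exact h.symm
  · exact absurd hc (hn c)

lemma aux_nf (hnoeth : WellFounded (fun w₁ w₂ : List G => MStep R w₂ w₁)) (u : List G) :
    ∃ n, ReflTransGen (MStep R) u n ∧ ∀ m, ¬ MStep R n m := by
  induction u using hnoeth.induction with
  | _ u ih =>
    by_cases h : ∃ m, MStep R u m
    · obtain ⟨m, hm⟩ := h
      obtain ⟨n, h1, h2⟩ := ih m hm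
      exact ⟨n, .head hm h1, h2⟩
    · exact ⟨u, .refl, fun m hm => h ⟨m, hm⟩⟩

lemma aux_prefix_normal {n v : List G} (hn : ∀ m, ¬ MStep R n m) (hp : v <+: n) :
    ∀ m, ¬ MStep R v m := by
  rintro m ⟨a, l, r, b, hR, hv, -⟩
  obtain ⟨rest, hrest⟩ := hp
  exact hn (a ++ r ++ (b ++ rest))
    ⟨a, l, r, b ++ rest, hR, by rw [← hrest, hv]; simp, rfl⟩

lemma aux_greedy : ∀ (n : List G), (∀ m, ¬ MStep R n m) → ∀ x : X,
    ∃ (v : List G) (z : X), v <+: n ∧ ReflTransGen (PStep R act) (n, x) (v, z) ∧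
      (∀ q, ¬ PStep R act (v, z) q) ∧
      (∀ m, v <+: m → m <+: n → ∃ z', ReflTransGen (PStep R act) (n, x) (m, z')) := by
  intro n
  induction n using List.reverseRecOn with
  | nil =>
    intro hn x
    refine ⟨[], x, List.prefix_refl _, .refl, ?_, ?_⟩
    · rintro q (⟨hm, -⟩ | ⟨w, g, y, h1, -⟩)
      · exact hn _ hm
      · simp at h1
    · intro m h1 h2
      obtain rfl : m = [] := List.prefix_nil.mp h2
      exact ⟨x, .refl⟩
  | append_singleton w' g ih =>
    intro hn x
    cases hy : act g x with
    | none =>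
      refine ⟨w' ++ [g], x, List.prefix_refl _, .refl, ?_, ?_⟩
      · rintro q (⟨hm, -⟩ | ⟨w, g', y, h1, h2, -⟩)
        · exact hn _ hm
        · obtain ⟨rfl, hg⟩ := List.append_inj' h1 rfl
          obtain rfl : g = g' := by simpa using hg
          simp [hy] at h2
      · intro m h1 h2
        obtain rfl : w' ++ [g] = m := h1.eq_of_length (le_antisymm h1.length_le h2.length_le)
        exact ⟨x, .refl⟩
    | some y =>
      have hn' : ∀ m, ¬ MStep R w' m := aux_prefix_normal hn (List.prefix_append w' [g])
      obtain ⟨v, z, hv1, hv2, hv3, hv4⟩ := ih hn' y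
      have step : PStep R act (w' ++ [g], x) (w', y) := Or.inr ⟨w', g, y, rfl, hy, rfl, rfl⟩
      refine ⟨v, z, hv1.trans (List.prefix_append _ _), .head step hv2, hv3, ?_⟩
      intro m h1 h2
      rcases List.prefix_concat_iff.mp h2 with heq | h2'
      · exact ⟨x, by rw [heq]⟩
      · obtain ⟨z', hz'⟩ := hv4 m h1 h2'
        exact ⟨z', .head step hz'⟩

open Classical in
noncomputable def lcpAux {α : Type*} : List α → List α → List α
  | a :: as, b :: bs => if a = b then a :: lcpAux as bs else []
  | _, _ => []

lemma lcp_prefix_left {α : Type*} : ∀ (l₁ l₂ : List α), lcpAux l₁ l₂ <+: l₁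
  | [], _ => by simp [lcpAux]
  | a :: as, [] => by simp [lcpAux]
  | a :: as, b :: bs => by
    by_cases h : a = b
    · simpa [lcpAux, h, List.cons_prefix_iff] using lcp_prefix_left as bs
    · simp [lcpAux, h]

lemma lcp_prefix_right {α : Type*} : ∀ (l₁ l₂ : List α), lcpAux l₁ l₂ <+: l₂
  | [], _ => by simp [lcpAux]
  | a :: as, [] => by simp [lcpAux]
  | a :: as, b :: bs => by
    by_cases h : a = b
    · subst h; simpa [lcpAux, List.cons_prefix_iff] using lcp_prefix_right as bs
    · simp [lcpAux, h]

lemma prefix_lcp {α : Type*} : ∀ {v l₁ l₂ : List α}, v <+: l₁ → v <+: l₂ → v <+: lcpAux l₁ l₂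
  | [], _, _, _, _ => by simp
  | a :: vs, [], _, h1, _ => by simp at h1
  | a :: vs, _ :: _, [], _, h2 => by simp at h2
  | a :: vs, b :: bs, c :: cs, h1, h2 => by
    rw [List.cons_prefix_cons] at h1 h2
    obtain ⟨rfl, h1⟩ := h1
    obtain ⟨rfl, h2⟩ := h2
    simpa [lcpAux, List.cons_prefix_iff] using prefix_lcp h1 h2

lemma aux_pair
    (hconfP : ∀ p q₁ q₂ : List G × X, ReflTransGen (PStep R act) p q₁ →
      ReflTransGen (PStep R act) p q₂ →
      ∃ t, ReflTransGen (PStep R act) q₁ t ∧ ReflTransGen (PStep R act) q₂ t)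
    {u u' n n' w : List G}
    (hn : ReflTransGen (MStep R) u n) (hnn : ∀ m, ¬ MStep R n m)
    (hn' : ReflTransGen (MStep R) u' n') (hnn' : ∀ m, ¬ MStep R n' m)
    (hw : lcpAux n n' <+: w) (hwn : w <+: n ∨ w <+: n')
    {x y : X} (hxy : EqvGen (PStep R act) (u, x) (u', y)) :
    ∃ z, EqvGen (PStep R act) (u, x) (w, z) := by
  obtain ⟨v, z, hv1, hv2, hv3, hv4⟩ := aux_greedy (act := act) n hnn x
  obtain ⟨v', z', hv1', hv2', hv3', hv4'⟩ := aux_greedy (act := act) n' hnn' y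
  have r1 : ReflTransGen (PStep R act) (u, x) (v, z) := (aux_lift hn x).trans hv2
  have r1' : ReflTransGen (PStep R act) (u', y) (v', z') := (aux_lift hn' y).trans hv2'
  obtain ⟨t, ht1, ht2⟩ := aux_cr hconfP hxy
  obtain ⟨s, hs1, hs2⟩ := hconfP _ _ _ ht1 r1
  obtain rfl : s = (v, z) := aux_nf_rtg hv3 hs2
  obtain ⟨s', hs1', hs2'⟩ := hconfP _ _ _ ht2 r1'
  obtain rfl : s' = (v', z') := aux_nf_rtg hv3' hs2'
  obtain ⟨e, he1, he2⟩ := hconfP t _ _ hs1 hs1'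
  have e1 : e = (v, z) := aux_nf_rtg hv3 he1
  have e2 : e = (v', z') := aux_nf_rtg hv3' he2
  have hvv : v = v' := congrArg Prod.fst (e1.symm.trans e2)
  have hvw : v <+: w := (prefix_lcp hv1 (hvv ▸ hv1')).trans hw
  rcases hwn with h | h
  · obtain ⟨z'', hz⟩ := hv4 w hvw h
    exact ⟨z'', aux_rtg_eqv ((aux_lift hn x).trans hz)⟩
  · obtain ⟨z'', hz⟩ := hv4' w (hvv ▸ hvw) h
    exact ⟨z'', hxy.trans _ _ _ (aux_rtg_eqv ((aux_lift hn' y).trans hz))⟩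

end Aux

/-- For a confluent partial action (encoded by a confluent presentation `⟨G|R⟩`
and the induced rewriting on `G* × X`), for every triple of monoid elements
(represented by words `u₁ u₂ u₃`) there is `w` such that each pairwise
intersection `uᵢ·X ∩ u_{i+1}·X` (indices mod 3) in the globalization
`Y = (G* × X)/↔*` is contained in `w·X`. Membership of the class of `(uᵢ,x)`
in `w·X` is expressed as `∃ z, (uᵢ,x) ↔* (w,z)`. -/
theorem stmt_6 {G X : Type*} (R : List G → List G → Prop) (act : G → X → Option X)
    (hnoeth : WellFounded (fun w₁ w₂ : List G => MStep R w₂ w₁))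
    (hconfM : ∀ w s₁ s₂ : List G, Relation.ReflTransGen (MStep R) w s₁ →
      Relation.ReflTransGen (MStep R) w s₂ →
      ∃ t, Relation.ReflTransGen (MStep R) s₁ t ∧ Relation.ReflTransGen (MStep R) s₂ t)
    (hnosingle : ∀ (g : G) (r : List G), ¬ R [g] r)
    (hconfP : ∀ p q₁ q₂ : List G × X, Relation.ReflTransGen (PStep R act) p q₁ →
      Relation.ReflTransGen (PStep R act) p q₂ →
      ∃ t, Relation.ReflTransGen (PStep R act) q₁ t ∧
        Relation.ReflTransGen (PStep R act) q₂ t)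
    (u₁ u₂ u₃ : List G) :
    ∃ w : List G,
      (∀ x y : X, Relation.EqvGen (PStep R act) (u₁, x) (u₂, y) →
        ∃ z, Relation.EqvGen (PStep R act) (u₁, x) (w, z)) ∧
      (∀ x y : X, Relation.EqvGen (PStep R act) (u₂, x) (u₃, y) →
        ∃ z, Relation.EqvGen (PStep R act) (u₂, x) (w, z)) ∧
      (∀ x y : X, Relation.EqvGen (PStep R act) (u₃, x) (u₁, y) →
        ∃ z, Relation.EqvGen (PStep R act) (u₃, x) (w, z)) := by
  obtain ⟨n₁, hn₁, hnn₁⟩ := aux_nf hnoeth u₁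
  obtain ⟨n₂, hn₂, hnn₂⟩ := aux_nf hnoeth u₂
  obtain ⟨n₃, hn₃, hnn₃⟩ := aux_nf hnoeth u₃
  set g12 := lcpAux n₁ n₂ with hg12
  set g23 := lcpAux n₂ n₃ with hg23
  set g31 := lcpAux n₃ n₁ with hg31
  have c1 := List.prefix_or_prefix_of_prefix (lcp_prefix_right n₁ n₂) (lcp_prefix_left n₂ n₃)
  have c2 := List.prefix_or_prefix_of_prefix (lcp_prefix_right n₂ n₃) (lcp_prefix_left n₃ n₁)
  have c3 := List.prefix_or_prefix_of_prefix (lcp_prefix_right n₃ n₁) (lcp_prefix_left n₁ n₂)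
  have hmax : ∃ w, g12 <+: w ∧ g23 <+: w ∧ g31 <+: w ∧ (w = g12 ∨ w = g23 ∨ w = g31) := by
    rcases c1 with h1 | h1 <;> rcases c2 with h2 | h2 <;> rcases c3 with h3 | h3
    · exact ⟨g31, h1.trans h2, h2, List.prefix_refl _, Or.inr (Or.inr rfl)⟩
    · exact ⟨g31, h1.trans h2, h2, List.prefix_refl _, Or.inr (Or.inr rfl)⟩
    · exact ⟨g23, h1, List.prefix_refl _, h2, Or.inr (Or.inl rfl)⟩
    · exact ⟨g23, h1, List.prefix_refl _, h2, Or.inr (Or.inl rfl)⟩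
    · exact ⟨g12, List.prefix_refl _, h1, h3, Or.inl rfl⟩
    · exact ⟨g31, h3, h2, List.prefix_refl _, Or.inr (Or.inr rfl)⟩
    · exact ⟨g12, List.prefix_refl _, h1, h3, Or.inl rfl⟩
    · exact ⟨g12, List.prefix_refl _, h1, h2.trans h1, Or.inl rfl⟩
  obtain ⟨w, hw12, hw23, hw31, hwmem⟩ := hmax
  have hw1 : w <+: n₁ ∨ w <+: n₂ := by
    rcases hwmem with rfl | rfl | rfl
    · exact Or.inl (lcp_prefix_left n₁ n₂)
    · exact Or.inr (lcp_prefix_left n₂ n₃)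
    · exact Or.inl (lcp_prefix_right n₃ n₁)
  have hw2 : w <+: n₂ ∨ w <+: n₃ := by
    rcases hwmem with rfl | rfl | rfl
    · exact Or.inl (lcp_prefix_right n₁ n₂)
    · exact Or.inl (lcp_prefix_left n₂ n₃)
    · exact Or.inr (lcp_prefix_left n₃ n₁)
  have hw3 : w <+: n₃ ∨ w <+: n₁ := by
    rcases hwmem with rfl | rfl | rfl
    · exact Or.inr (lcp_prefix_left n₁ n₂)
    · exact Or.inl (lcp_prefix_right n₂ n₃)
    · exact Or.inl (lcp_prefix_left n₃ n₁)
  refine ⟨w, ?_, ?_, ?_⟩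
  · exact fun x y h => aux_pair hconfP hn₁ hnn₁ hn₂ hnn₂ hw12 hw1 h
  · exact fun x y h => aux_pair hconfP hn₂ hnn₂ hn₃ hnn₃ hw23 hw2 h
  · exact fun x y h => aux_pair hconfP hn₃ hnn₃ hn₁ hnn₁ hw31 hw3 h
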